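/- Let k₁, k₂, k₃ be odd and for each i let y_{i,1}, …, y_{i,k_i} be distinct reals, with the conventions of Conjecture adf. Suppose condition (i) holds: for each i and each 0 ≤ p < q ≤ k_i with p ≡ q (mod 2), the pairs {y_{i,p}, y_{i,p+1}} and {−y_{i,q}, −y_{i,q+1}} have non-crossing sums (with y_{i,0} = y_{i,k_i+1} = −∞). Then for each i, the winding number W_i(y) := ½ + ½ ∑_{j=1}^{k_i} (−1)^{j−1} sgn(y_{i,j} − y) satisfies W_i(y_{i,j}) = ½ for all j = 1,…,k_i, and W_i(y) ∈ {0, 1} for all y ∉ {y_{i,1},…,y_{i,k_i}}. -/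

import Mathlib

open scoped Classical

/-- Sign function on extended reals, with `sgn(−∞) = −1` and `sgn(+∞) = 1`. -/
noncomputable def esgn (x : EReal) : ℝ := if x < 0 then -1 else if 0 < x then 1 else 0

/-- Two pairs `{a₁,a₂}`, `{b₁,b₂}` of extended reals have *non-crossing sums* if all four
sums are nonzero and `∑_{j,j′} (−1)^{j+j′} sgn(aⱼ + bⱼ′) = 0`. -/
def NCS2E (a1 a2 b1 b2 : EReal) : Prop :=
  (a1 + b1 ≠ 0 ∧ a1 + b2 ≠ 0 ∧ a2 + b1 ≠ 0 ∧ a2 + b2 ≠ 0) ∧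
    esgn (a1 + b1) - esgn (a2 + b1) - esgn (a1 + b2) + esgn (a2 + b2) = 0

/-- The extension of `Y : ℕ → ℝ` (with meaningful indices `1, …, k`) by the convention
`y₀ = y_{k+1} = −∞`. -/
noncomputable def extY (k : ℕ) (Y : ℕ → ℝ) (j : ℕ) : EReal :=
  if 1 ≤ j ∧ j ≤ k then ((Y j : ℝ) : EReal) else ⊥

/-- The winding number `W(t) = ½ + ½ ∑_{j=1}^{k} (−1)^{j−1} sgn(yⱼ − t)`. -/
noncomputable def wind (k : ℕ) (Y : ℕ → ℝ) (t : ℝ) : ℝ :=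
  1 / 2 + 1 / 2 * ∑ j ∈ Finset.range k, (-1 : ℝ) ^ j * Real.sign (Y (j + 1) - t)


/-! ### Basic betweenness -/

def Btwn (x u w : ℝ) : Prop := (u - x) * (w - x) < 0

lemma btwn_iff {x u w : ℝ} : Btwn x u w ↔ (u < x ∧ x < w) ∨ (w < x ∧ x < u) := by
  unfold Btwn
  rw [mul_neg_iff]
  constructor
  · rintro (⟨h1, h2⟩ | ⟨h1, h2⟩)
    · right; constructor <;> linarith
    · left; constructor <;> linarith
  · rintro (⟨h1, h2⟩ | ⟨h1, h2⟩)
    · right; constructor <;> linarith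
    · left; constructor <;> linarith

lemma btwn_lt {x u w : ℝ} (h : u < w) : Btwn x u w ↔ (u < x ∧ x < w) := by
  rw [btwn_iff]
  constructor
  · rintro (⟨h1, h2⟩ | ⟨h1, h2⟩)
    · exact ⟨h1, h2⟩
    · exact absurd (lt_trans (lt_trans h1 h2) h) (lt_irrefl _)
  · exact fun h' => Or.inl h'

lemma not_btwn_self_left {x w : ℝ} : ¬ Btwn x x w := by
  rw [btwn_iff]; rintro (⟨h1, h2⟩ | ⟨h1, h2⟩) <;> linarith

lemma not_btwn_self_right {x u : ℝ} : ¬ Btwn x u x := by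
  rw [btwn_iff]; rintro (⟨h1, h2⟩ | ⟨h1, h2⟩) <;> linarith

/-- convexity -/
lemma btwn_trans {z x y u w : ℝ} (h : Btwn z x y) (hx : Btwn x u w) (hy : Btwn y u w) :
    Btwn z u w := by
  rw [btwn_iff] at *
  rcases h with ⟨h1, h2⟩ | ⟨h1, h2⟩ <;> rcases hx with ⟨a1, a2⟩ | ⟨a1, a2⟩ <;>
    rcases hy with ⟨b1, b2⟩ | ⟨b1, b2⟩ <;> [skip; skip; skip; skip; skip; skip; skip; skip] <;>
    first
      | (left; constructor <;> linarith)
      | (right; constructor <;> linarith)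

/-- if p is inside interval (u,w) and q is strictly outside, some endpoint separates p from q -/
lemma btwn_sep {p q u w : ℝ} (hp : Btwn p u w) (hq : ¬ Btwn q u w) (hqu : q ≠ u) (hqw : q ≠ w) :
    Btwn u p q ∨ Btwn w p q := by
  rw [btwn_iff] at hp
  rcases hp with ⟨h1, h2⟩ | ⟨h1, h2⟩
  · -- u < p < w
    have hq' : q < u ∨ w < q := by
      rcases lt_trichotomy q u with h | h | h
      · exact Or.inl h
      · exact absurd h hqu
      · rcases lt_trichotomy q w with g | g | g
        · exact absurd (btwn_iff.mpr (Or.inl ⟨h, g⟩)) hq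
        · exact absurd g hqw
        · exact Or.inr g
    rcases hq' with h | h
    · exact Or.inl (btwn_iff.mpr (Or.inr ⟨h, h1⟩))
    · exact Or.inr (btwn_iff.mpr (Or.inl ⟨h2, h⟩))
  · -- w < p < u
    have hq' : q < w ∨ u < q := by
      rcases lt_trichotomy q w with h | h | h
      · exact Or.inl h
      · exact absurd h hqw
      · rcases lt_trichotomy q u with g | g | g
        · exact absurd (btwn_iff.mpr (Or.inr ⟨h, g⟩)) hq
        · exact absurd g hqu
        · exact Or.inr g
    rcases hq' with h | h
    · exact Or.inr (btwn_iff.mpr (Or.inr ⟨h, h1⟩))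
    · exact Or.inl (btwn_iff.mpr (Or.inl ⟨h2, h⟩))

/-- chain/union: conv(r1,r2) ⊆ conv(r1,a) ∪ [conv(a,b)] ∪ conv(b,r2) -/
lemma btwn_chain {x r1 r2 a b : ℝ} (h : Btwn x r1 r2) (hab : ¬ Btwn x a b) (hxa : x ≠ a)
    (hxb : x ≠ b) : Btwn x r1 a ∨ Btwn x b r2 := by
  rw [btwn_iff] at h
  rcases lt_trichotomy x a with ha | ha | ha
  · rcases lt_trichotomy x b with hb | hb | hb
    · rcases h with ⟨h1, h2⟩ | ⟨h1, h2⟩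
      · exact Or.inl (btwn_iff.mpr (Or.inl ⟨h1, ha⟩))
      · exact Or.inr (btwn_iff.mpr (Or.inr ⟨h1, hb⟩))
    · exact absurd hb hxb
    · exact absurd (btwn_iff.mpr (Or.inr ⟨hb, ha⟩)) hab
  · exact absurd ha hxa
  · rcases lt_trichotomy x b with hb | hb | hb
    · exact absurd (btwn_iff.mpr (Or.inl ⟨ha, hb⟩)) hab
    · exact absurd hb hxb
    · rcases h with ⟨h1, h2⟩ | ⟨h1, h2⟩
      · exact Or.inr (btwn_iff.mpr (Or.inl ⟨hb, h2⟩))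
      · exact Or.inl (btwn_iff.mpr (Or.inr ⟨ha, h2⟩))

lemma btwn_len {x y u w : ℝ} (hx : Btwn x u w) (hy : Btwn y u w) : |x - y| < |u - w| := by
  rw [btwn_iff] at hx hy
  rw [abs_sub_lt_iff]
  rcases hx with ⟨h1, h2⟩ | ⟨h1, h2⟩ <;> rcases hy with ⟨g1, g2⟩ | ⟨g1, g2⟩ <;>
    constructor <;> [skip; skip; skip; skip; skip; skip; skip; skip] <;>
    rcases abs_cases (u - w) with ⟨e1, e2⟩ | ⟨e1, e2⟩ <;> linarith

/-! ### Sign lemmas -/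

lemma sign_pm {x : ℝ} (h : x ≠ 0) : Real.sign x = -1 ∨ Real.sign x = 1 := by
  rcases lt_or_gt_of_ne h with h' | h'
  · exact Or.inl (Real.sign_of_neg h')
  · exact Or.inr (Real.sign_of_pos h')

lemma btwn_iff_sign {x u w : ℝ} (hu : u ≠ x) (hw : w ≠ x) :
    Btwn x u w ↔ Real.sign (u - x) ≠ Real.sign (w - x) := by
  have hu' : u - x ≠ 0 := sub_ne_zero.mpr hu
  have hw' : w - x ≠ 0 := sub_ne_zero.mpr hw
  unfold Btwn
  rcases lt_or_gt_of_ne hu' with h1 | h1 <;> rcases lt_or_gt_of_ne hw' with h2 | h2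
  · rw [Real.sign_of_neg h1, Real.sign_of_neg h2]
    simp only [ne_eq, not_true_eq_false, iff_false, not_lt]
    nlinarith
  · rw [Real.sign_of_neg h1, Real.sign_of_pos h2]
    constructor
    · intro _; norm_num
    · intro _; nlinarith
  · rw [Real.sign_of_pos h1, Real.sign_of_neg h2]
    constructor
    · intro _; norm_num
    · intro _; nlinarith
  · rw [Real.sign_of_pos h1, Real.sign_of_pos h2]
    simp only [ne_eq, not_true_eq_false, iff_false, not_lt]
    nlinarith

/-- The key sign-sum decoding: the 4-term alternating sign sum vanishes iff the two
chords are non-crossing, in both readings. -/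
lemma sgn4 {a1 a2 b1 b2 : ℝ} (h11 : a1 ≠ b1) (h12 : a1 ≠ b2) (h21 : a2 ≠ b1) (h22 : a2 ≠ b2)
    (heq : Real.sign (a1 - b1) - Real.sign (a2 - b1) - Real.sign (a1 - b2) +
      Real.sign (a2 - b2) = 0) :
    (Btwn b1 a1 a2 ↔ Btwn b2 a1 a2) ∧ (Btwn a1 b1 b2 ↔ Btwn a2 b1 b2) := by
  have e11 := sign_pm (sub_ne_zero.mpr h11)
  have e21 := sign_pm (sub_ne_zero.mpr h21)
  have e12 := sign_pm (sub_ne_zero.mpr h12)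
  have e22 := sign_pm (sub_ne_zero.mpr h22)
  rw [btwn_iff_sign h11 h21, btwn_iff_sign h12 h22, btwn_iff_sign (Ne.symm h11) (Ne.symm h12),
    btwn_iff_sign (Ne.symm h21) (Ne.symm h22)]
  have c1 : Real.sign (b1 - a1) = - Real.sign (a1 - b1) := by
    rw [← Real.sign_neg]; ring_nf
  have c2 : Real.sign (b1 - a2) = - Real.sign (a2 - b1) := by
    rw [← Real.sign_neg]; ring_nf
  have c3 : Real.sign (b2 - a1) = - Real.sign (a1 - b2) := by
    rw [← Real.sign_neg]; ring_nf
  have c4 : Real.sign (b2 - a2) = - Real.sign (a2 - b2) := by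
    rw [← Real.sign_neg]; ring_nf
  rcases e11 with e11 | e11 <;> rcases e21 with e21 | e21 <;> rcases e12 with e12 | e12 <;>
    rcases e22 with e22 | e22 <;>
    rw [e11, e21, e12, e22] at heq ⊢ <;> rw [c1, c2, c3, c4, e11, e21, e12, e22] <;>
    (norm_num at heq <;> norm_num)

/-! ### Summation machinery -/

def pty (j : ℕ) : ℤ := if j % 2 = 0 then 1 else 0

noncomputable def Dd (k : ℕ) (v : ℕ → ℝ) (t : ℝ) : ℤ :=
  ∑ j ∈ Finset.range k, (-1 : ℤ) ^ j * (if v (j + 1) < t then 1 else 0)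

lemma lodd (n : ℕ) (h : ℕ → ℤ) :
    ∑ j ∈ Finset.range (2 * n + 1), (-1 : ℤ) ^ j * h (j + 1) =
      h (2 * n + 1) + ∑ i ∈ Finset.range n, (h (2 * i + 1) - h (2 * i + 2)) := by
  induction n with
  | zero => simp
  | succ n ih =>
    have e : 2 * (n + 1) + 1 = (2 * n + 1) + 1 + 1 := by omega
    rw [e, Finset.sum_range_succ, Finset.sum_range_succ, ih, Finset.sum_range_succ]
    have o1 : ((-1 : ℤ)) ^ (2 * n + 1) = -1 := Odd.neg_one_pow ⟨n, by ring⟩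
    have o2 : ((-1 : ℤ)) ^ (2 * n + 1 + 1) = 1 := Even.neg_one_pow ⟨n + 1, by ring⟩
    rw [o1, o2]
    simp only [show 2 * n + 1 + 1 = 2 * n + 2 from by omega,
      show 2 * n + 2 + 1 = 2 * n + 3 from by omega,
      show 2 * n + 1 + 1 + 1 = 2 * n + 3 from by omega]
    ring

lemma dd_lodd (n : ℕ) (v : ℕ → ℝ) (t : ℝ) :
    Dd (2 * n + 1) v t = (if v (2 * n + 1) < t then 1 else 0) +
      ∑ i ∈ Finset.range n,
        ((if v (2 * i + 1) < t then (1 : ℤ) else 0) - (if v (2 * i + 2) < t then 1 else 0)) := by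
  unfold Dd
  exact lodd n fun i => if v i < t then 1 else 0

lemma dd_diff (n : ℕ) (v : ℕ → ℝ) {x y : ℝ} (hxy : x ≤ y) :
    Dd (2 * n + 1) v y - Dd (2 * n + 1) v x =
      (if x ≤ v (2 * n + 1) ∧ v (2 * n + 1) < y then 1 else 0) +
      ∑ i ∈ Finset.range n,
        ((if x ≤ v (2 * i + 1) ∧ v (2 * i + 1) < y then (1 : ℤ) else 0) -
          (if x ≤ v (2 * i + 2) ∧ v (2 * i + 2) < y then 1 else 0)) := by
  have key : ∀ z : ℝ, (if x ≤ z ∧ z < y then (1 : ℤ) else 0) =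
      (if z < y then (1 : ℤ) else 0) - (if z < x then 1 else 0) := by
    intro z
    by_cases h1 : z < x <;> by_cases h2 : z < y <;> simp [h1, h2] <;>
      first
        | (intro h; linarith)
        | (constructor <;> intro h <;> linarith)
        | linarith
  rw [dd_lodd n v y, dd_lodd n v x]
  simp only [key, Finset.sum_sub_distrib]
  ring

/-! ### More order helpers -/

lemma btwn_symm {x u w : ℝ} : Btwn x u w ↔ Btwn x w u := by
  unfold Btwn; rw [mul_comm]

lemma same_side {x y a : ℝ} (h : ¬ Btwn a x y) (hx : x ≠ a) (hy : y ≠ a) :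
    (x < a ↔ y < a) := by
  constructor
  · intro h1
    rcases lt_trichotomy y a with h2 | h2 | h2
    · exact h2
    · exact absurd h2 hy
    · exact absurd (btwn_iff.mpr (Or.inl ⟨h1, h2⟩)) h
  · intro h1
    rcases lt_trichotomy x a with h2 | h2 | h2
    · exact h2
    · exact absurd h2 hx
    · exact absurd (btwn_iff.mpr (Or.inr ⟨h1, h2⟩)) h

lemma pos_mul_iff {P Q : ℝ} (hP : P ≠ 0) (hQ : Q ≠ 0) : ((P < 0 ↔ Q < 0) ↔ 0 < P * Q) := by
  rcases lt_or_gt_of_ne hP with h | h <;> rcases lt_or_gt_of_ne hQ with g | g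
  · constructor
    · intro _; exact mul_pos_of_neg_of_neg h g
    · intro _; constructor <;> intro _ <;> assumption
  · constructor
    · intro hi; exact absurd g (not_lt.mpr (le_of_lt (hi.mp h)))
    · intro hi; nlinarith
  · constructor
    · intro hi; exact absurd h (not_lt.mpr (le_of_lt (hi.mpr g)))
    · intro hi; nlinarith
  · constructor
    · intro _; exact mul_pos h g
    · intro _; constructor <;> intro hcon <;> linarith

lemma cross_symm {a b c d : ℝ} (hca : c ≠ a) (hcb : c ≠ b) (hda : d ≠ a) (hdb : d ≠ b)
    (h : Btwn c a b ↔ Btwn d a b) : Btwn a c d ↔ Btwn b c d := by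
  have hP : (a - c) * (b - c) ≠ 0 :=
    mul_ne_zero (sub_ne_zero.mpr (Ne.symm hca)) (sub_ne_zero.mpr (Ne.symm hcb))
  have hQ : (a - d) * (b - d) ≠ 0 :=
    mul_ne_zero (sub_ne_zero.mpr (Ne.symm hda)) (sub_ne_zero.mpr (Ne.symm hdb))
  have hR : (c - a) * (d - a) ≠ 0 :=
    mul_ne_zero (sub_ne_zero.mpr hca) (sub_ne_zero.mpr hda)
  have hS : (c - b) * (d - b) ≠ 0 :=
    mul_ne_zero (sub_ne_zero.mpr hcb) (sub_ne_zero.mpr hdb)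
  have h1 : 0 < ((a - c) * (b - c)) * ((a - d) * (b - d)) := (pos_mul_iff hP hQ).mp h
  have h2 : 0 < ((c - a) * (d - a)) * ((c - b) * (d - b)) := by nlinarith
  exact (pos_mul_iff hR hS).mpr h2

/-- Directional merged-chord lemma. `a,b` the removed (gap) chord, `r1,r2` the merged
chord endpoints (`A = (r1,a)`, `B = (b,r2)` old chords), `X, Y` the endpoints of another
chord of the same parity class. -/
lemma merged_dir {a b r1 r2 X Y : ℝ}
    (F1 : Btwn X r1 a ↔ Btwn Y r1 a) (F2 : Btwn X b r2 ↔ Btwn Y b r2)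
    (F1' : Btwn r1 X Y ↔ Btwn a X Y) (F2' : Btwn b X Y ↔ Btwn r2 X Y)
    (F4x : ¬ Btwn X a b) (F4y : ¬ Btwn Y a b)
    (hxa : X ≠ a) (hxb : X ≠ b) (hya : Y ≠ a) (hyb : Y ≠ b)
    (hyr1 : Y ≠ r1) (hyr2 : Y ≠ r2)
    (h : Btwn X r1 r2) : Btwn Y r1 r2 := by
  by_contra hY
  rcases btwn_chain h F4x hxa hxb with hXA | hXB
  · have hYA : Btwn Y r1 a := F1.mp hXA
    rcases btwn_sep h hY hyr1 hyr2 with hs | hs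
    · exact not_btwn_self_left (btwn_trans hs hXA hYA)
    · have hr2 : Btwn r2 r1 a := btwn_trans hs hXA hYA
      have hbC : Btwn b X Y := F2'.mpr hs
      have haC : ¬ Btwn a X Y := by
        intro hcon
        exact not_btwn_self_right (btwn_trans hcon hXA hYA)
      rcases btwn_sep hbC haC (Ne.symm hxa) (Ne.symm hya) with hs2 | hs2
      · exact F4x (btwn_symm.mp hs2)
      · exact F4y (btwn_symm.mp hs2)
  · have hYB : Btwn Y b r2 := F2.mp hXB
    rcases btwn_sep h hY hyr1 hyr2 with hs | hs
    · have haC : Btwn a X Y := F1'.mp hs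
      have hbC : ¬ Btwn b X Y := by
        intro hcon
        exact not_btwn_self_left (btwn_trans hcon hXB hYB)
      rcases btwn_sep haC hbC (Ne.symm hxb) (Ne.symm hyb) with hs2 | hs2
      · exact F4x hs2
      · exact F4y hs2
    · exact not_btwn_self_right (btwn_trans hs hXB hYB)

/-! ### The hypothesis bundle -/

structure Hyp (k : ℕ) (v : ℕ → ℝ) : Prop where
  dist : ∀ j j', 1 ≤ j → j < j' → j' ≤ k → v j ≠ v j'
  hf : ∀ p q, 1 ≤ p → p + 1 < q → q + 1 ≤ k → p % 2 = q % 2 →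
      (Btwn (v q) (v p) (v (p+1)) ↔ Btwn (v (q+1)) (v p) (v (p+1))) ∧
      (Btwn (v p) (v q) (v (q+1)) ↔ Btwn (v (p+1)) (v q) (v (q+1)))
  h1 : ∀ p, p % 2 = 1 → p + 2 ≤ k → ¬ Btwn (v k) (v p) (v (p+1))
  h0 : ∀ q, q % 2 = 0 → 2 ≤ q → q + 1 ≤ k → ¬ Btwn (v 1) (v q) (v (q+1))

lemma Hyp.vne {k : ℕ} {v : ℕ → ℝ} (H : Hyp k v) {a b : ℕ} (ha1 : 1 ≤ a) (hak : a ≤ k)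
    (hb1 : 1 ≤ b) (hbk : b ≤ k) (hab : a ≠ b) : v a ≠ v b := by
  rcases lt_or_gt_of_ne hab with h | h
  · exact H.dist a b ha1 h hbk
  · exact (H.dist b a hb1 h hak).symm

/-- wrapper: endpoints of chord `q` relative to the interval of chord `p`, any order. -/
lemma Hyp.hfw {k : ℕ} {v : ℕ → ℝ} (H : Hyp k v) {p q : ℕ} (hp : 1 ≤ p) (hq : 1 ≤ q)
    (hne : p ≠ q) (hpar : p % 2 = q % 2) (hpk : p + 1 ≤ k) (hqk : q + 1 ≤ k) :
    Btwn (v q) (v p) (v (p+1)) ↔ Btwn (v (q+1)) (v p) (v (p+1)) := by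
  rcases lt_or_gt_of_ne hne with h | h
  · exact (H.hf p q hp (by omega) hqk hpar).1
  · exact (H.hf q p hq (by omega) hpk hpar.symm).2

/-- existence of a minimal finite even chord; its open interval contains no vertex. -/
lemma exMin {k : ℕ} {v : ℕ → ℝ} (H : Hyp k v) (hk : k % 2 = 1) (hk3 : 3 ≤ k) :
    ∃ m, m % 2 = 0 ∧ 2 ≤ m ∧ m + 1 ≤ k ∧
      ∀ c, 1 ≤ c → c ≤ k → c ≠ m → c ≠ m + 1 → ¬ Btwn (v c) (v m) (v (m+1)) := by
  classical
  set s : Finset ℕ := (Finset.range (k+1)).filter (fun p => p % 2 = 0 ∧ 2 ≤ p ∧ p + 1 ≤ k)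
    with hs
  have hne : s.Nonempty := by
    refine ⟨2, Finset.mem_filter.mpr ⟨Finset.mem_range.mpr (by omega), by omega, by omega,
      by omega⟩⟩
  obtain ⟨m, hm, hmin⟩ := Finset.exists_min_image s (fun p => |v p - v (p+1)|) hne
  simp only [hs, Finset.mem_filter, Finset.mem_range] at hm
  obtain ⟨-, hm0, hm2, hmk⟩ := hm
  refine ⟨m, hm0, hm2, hmk, ?_⟩
  intro c hc1 hck hcm hcm1 hbtw
  by_cases h1c : c = 1
  · subst h1c
    exact H.h0 m hm0 hm2 hmk hbtw
  · have hc2 : 2 ≤ c := by omega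
    set c' := if c % 2 = 0 then c else c - 1 with hc'
    have hc'0 : c' % 2 = 0 := by simp only [hc']; split <;> omega
    have hc'2 : 2 ≤ c' := by simp only [hc']; split <;> omega
    have hc'k : c' + 1 ≤ k := by simp only [hc']; split <;> omega
    have hcc' : c = c' ∨ c = c' + 1 := by simp only [hc']; split <;> omega
    have hc'm : c' ≠ m := by
      rcases hcc' with h | h <;> omega
    have hiff := H.hfw (p := m) (q := c') (by omega) (by omega) (Ne.symm hc'm)
      (by omega) hmk hc'k
    have hb1 : Btwn (v c') (v m) (v (m+1)) ∧ Btwn (v (c'+1)) (v m) (v (m+1)) := by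
      rcases hcc' with h | h
    
      · exact ⟨h ▸ hbtw, hiff.mp (h ▸ hbtw)⟩
      · exact ⟨hiff.mpr (h ▸ hbtw), h ▸ hbtw⟩
    have hlen := btwn_len hb1.1 hb1.2
    have hmem : c' ∈ s :=
      Finset.mem_filter.mpr ⟨Finset.mem_range.mpr (by omega), hc'0, hc'2, hc'k⟩
    have := hmin c' hmem
    linarith

/-- relation between `Dd` of the original and the reduced configuration. -/
lemma dd_rel {k M : ℕ} (v : ℕ → ℝ) (t : ℝ) (hM2 : 2 ≤ M) (hM : M % 2 = 0)
    (hMk : M + 1 ≤ k) :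
    Dd k v t = Dd (k - 2) (fun j => if j < M then v j else v (j + 2)) t
      - (if v M < t then 1 else 0) + (if v (M+1) < t then 1 else 0) := by
  obtain ⟨r, hr⟩ : ∃ r, k = (M + 1) + r := ⟨k - (M+1), by omega⟩
  subst hr
  unfold Dd
  rw [show M + 1 + r - 2 = (M - 1) + r by omega,
    show M + 1 + r = (M - 1) + (2 + r) by omega,
    Finset.sum_range_add, Finset.sum_range_add, Finset.sum_range_add,
    Finset.sum_range_succ, Finset.sum_range_one]
  have hA : ∑ j ∈ Finset.range (M - 1),
      (-1 : ℤ) ^ j * (if (fun j => if j < M then v j else v (j + 2)) (j + 1) < t then 1 else 0) =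
      ∑ j ∈ Finset.range (M - 1), (-1 : ℤ) ^ j * (if v (j + 1) < t then 1 else 0) := by
    refine Finset.sum_congr rfl ?_
    intro j hj
    rw [Finset.mem_range] at hj
    simp only [if_pos (by omega : j + 1 < M)]
  have hB : ∑ i ∈ Finset.range r,
      (-1 : ℤ) ^ ((M - 1) + i) *
        (if (fun j => if j < M then v j else v (j + 2)) (((M - 1) + i) + 1) < t
          then 1 else 0) =
      ∑ i ∈ Finset.range r,
        (-1 : ℤ) ^ ((M - 1) + (2 + i)) * (if v (((M - 1) + (2 + i)) + 1) < t then 1 else 0) := by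
    refine Finset.sum_congr rfl ?_
    intro i hi
    simp only [if_neg (by omega : ¬ ((M - 1) + i + 1 < M))]
    have hp : (-1 : ℤ) ^ ((M - 1) + (2 + i)) = (-1) ^ ((M - 1) + i) := by
      rw [show (M - 1) + (2 + i) = ((M - 1) + i) + 2 by omega, pow_add]
      norm_num
    rw [show (M - 1) + i + 1 + 2 = ((M - 1) + (2 + i)) + 1 by omega, hp]
  rw [hA, hB]
  have g0 : (-1 : ℤ) ^ ((M - 1) + 0) * (if v (((M - 1) + 0) + 1) < t then 1 else 0) =
      - (if v M < t then 1 else 0) := by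
    rw [show ((M - 1) + 0) + 1 = M by omega, Odd.neg_one_pow (by
      refine Nat.odd_iff.mpr ?_; omega)]
    ring
  have g1 : (-1 : ℤ) ^ ((M - 1) + 1) * (if v (((M - 1) + 1) + 1) < t then 1 else 0) =
      (if v (M + 1) < t then 1 else 0) := by
    rw [show ((M - 1) + 1) + 1 = M + 1 by omega, Even.neg_one_pow (by
      refine Nat.even_iff.mpr ?_; omega)]
    ring
  rw [g0, g1]
  ring

/-! ### The core induction -/

set_option maxHeartbeats 3000000 in
theorem core : ∀ k, k % 2 = 1 → ∀ v : ℕ → ℝ, Hyp k v → ∀ m, 1 ≤ m → m ≤ k →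
    Dd k v (v m) = pty m := by
  intro k
  induction k using Nat.strong_induction_on with
  | _ k IH =>
    intro hk v H m hm1 hmk
    by_cases hk1 : k = 1
    · subst hk1
      have hm : m = 1 := by omega
      subst hm
      simp [Dd, pty]
    · have hk3 : 3 ≤ k := by omega
      obtain ⟨M, hM0, hM2, hMk, hgap⟩ := exMin H hk hk3
      set v' : ℕ → ℝ := fun j => if j < M then v j else v (j + 2) with hv'def
      set k' : ℕ := k - 2 with hk'def
      have hk' : k' % 2 = 1 := by omega
      have hk'lt : k' < k := by omega
      have hk'1 : 1 ≤ k' := by omega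
      obtain ⟨n', hn'⟩ : ∃ n', k' = 2 * n' + 1 := ⟨k' / 2, by omega⟩
      have hv'lt : ∀ j, j < M → v' j = v j := by
        intro j hj; simp only [hv'def, if_pos hj]
      have hv'ge : ∀ j, M ≤ j → v' j = v (j + 2) := by
        intro j hj; simp only [hv'def, if_neg (by omega : ¬ j < M)]
      have e1 : M - 1 + 1 = M := by omega
      -- chord mapping for non-merged chords
      have chordmap : ∀ p, 1 ≤ p → p + 1 ≤ k' → p ≠ M - 1 →
          ∃ c, 1 ≤ c ∧ c + 1 ≤ k ∧ c % 2 = p % 2 ∧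
            ((p + 1 < M ∧ c = p) ∨ (M ≤ p ∧ c = p + 2)) ∧
            v' p = v c ∧ v' (p + 1) = v (c + 1) := by
        intro p hp hpk hpm
        by_cases h : p + 1 < M
        · exact ⟨p, hp, by omega, rfl, Or.inl ⟨h, rfl⟩, hv'lt p (by omega), hv'lt (p+1) h⟩
        · have hpM : M ≤ p := by omega
          refine ⟨p + 2, by omega, by omega, by omega, Or.inr ⟨hpM, rfl⟩, hv'ge p hpM, ?_⟩
          rw [hv'ge (p+1) (by omega), show p + 1 + 2 = (p + 2) + 1 by omega]
      -- merged chord non-crossing (needs M + 3 ≤ k)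
      have hmerge : M + 3 ≤ k → ∀ c, c % 2 = 1 → 1 ≤ c → c + 2 ≤ k → c ≠ M - 1 → c ≠ M + 1 →
          (Btwn (v c) (v (M-1)) (v (M+2)) ↔ Btwn (v (c+1)) (v (M-1)) (v (M+2))) ∧
          (Btwn (v (M-1)) (v c) (v (c+1)) ↔ Btwn (v (M+2)) (v c) (v (c+1))) := by
        intro hM3 c hc1 hcl hck hcm1 hcp1
        have hcM : c ≠ M := by omega
        have hc1M : c + 1 ≠ M := by omega
        have hc1M1 : c + 1 ≠ M + 1 := by omega
        have F1 : Btwn (v c) (v (M-1)) (v M) ↔ Btwn (v (c+1)) (v (M-1)) (v M) := by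
          have := H.hfw (p := M-1) (q := c) (by omega) hcl (by omega) (by omega) (by omega)
            (by omega)
          rwa [e1] at this
        have F1' : Btwn (v (M-1)) (v c) (v (c+1)) ↔ Btwn (v M) (v c) (v (c+1)) := by
          have := H.hfw (p := c) (q := M-1) hcl (by omega) (by omega) (by omega) (by omega)
            (by omega)
          rwa [e1] at this
        have F2 : Btwn (v c) (v (M+1)) (v (M+2)) ↔ Btwn (v (c+1)) (v (M+1)) (v (M+2)) := by
          have := H.hfw (p := M+1) (q := c) (by omega) hcl (by omega) (by omega) (by omega)
            (by omega)
          rwa [show M + 1 + 1 = M + 2 by omega] at this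
        have F2' : Btwn (v (M+1)) (v c) (v (c+1)) ↔ Btwn (v (M+2)) (v c) (v (c+1)):= by
          have := H.hfw (p := c) (q := M+1) hcl (by omega) (by omega) (by omega) (by omega)
            (by omega)
          rwa [show M + 1 + 1 = M + 2 by omega] at this
        have F4x : ¬ Btwn (v c) (v M) (v (M+1)) := hgap c hcl (by omega) hcM hcp1
        have F4y : ¬ Btwn (v (c+1)) (v M) (v (M+1)) := hgap (c+1) (by omega) (by omega)
          hc1M hc1M1
        have hd1 : v c ≠ v M := H.vne hcl (by omega) (by omega) (by omega) hcM
        have hd2 : v c ≠ v (M+1) := H.vne hcl (by omega) (by omega) (by omega) hcp1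
        have hd3 : v (c+1) ≠ v M := H.vne (by omega) (by omega) (by omega) (by omega) hc1M
        have hd4 : v (c+1) ≠ v (M+1) := H.vne (by omega) (by omega) (by omega) (by omega) hc1M1
        have hd5 : v c ≠ v (M-1) := H.vne hcl (by omega) (by omega) (by omega) hcm1
        have hd6 : v (c+1) ≠ v (M-1) := H.vne (by omega) (by omega) (by omega) (by omega)
          (by omega)
        have hd7 : v c ≠ v (M+2) := H.vne hcl (by omega) (by omega) (by omega) (by omega)
        have hd8 : v (c+1) ≠ v (M+2) := H.vne (by omega) (by omega) (by omega) (by omega)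
          (by omega)
        have part1 : Btwn (v c) (v (M-1)) (v (M+2)) ↔ Btwn (v (c+1)) (v (M-1)) (v (M+2)) := by
          constructor
          · intro h
            exact merged_dir F1 F2 F1' F2' F4x F4y hd1 hd2 hd3 hd4 hd6 hd8 h
          · intro h
            exact merged_dir F1.symm F2.symm
              ((btwn_symm.trans F1').trans btwn_symm) ((btwn_symm.trans F2').trans btwn_symm)
              F4y F4x hd3 hd4 hd1 hd2 hd5 hd7 h
        refine ⟨part1, ?_⟩
        exact cross_symm hd5 hd7 hd6 hd8 part1
      -- the reduced configuration satisfies the hypotheses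
      have H' : Hyp k' v' := by
        refine ⟨?_, ?_, ?_, ?_⟩
        · -- dist
          intro j j' h1 h2 h3
          by_cases hj : j < M
          · by_cases hj' : j' < M
            · rw [hv'lt j hj, hv'lt j' hj']
              exact H.dist j j' h1 h2 (by omega)
            · rw [hv'lt j hj, hv'ge j' (by omega)]
              exact H.dist j (j'+2) h1 (by omega) (by omega)
          · rw [hv'ge j (by omega), hv'ge j' (by omega)]
            exact H.dist (j+2) (j'+2) (by omega) (by omega) (by omega)
        · -- hf
          intro p q hp hpq hqk hpar
          by_cases hpm : p = M - 1
          · -- merged chord as chord p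
            have hM3 : M + 3 ≤ k := by omega
            subst hpm
            obtain ⟨c, hc1, hck, hcpar, hcor, hvq, hvq1⟩ := chordmap q (by omega) (by omega)
              (by omega)
            have hvp : v' (M - 1) = v (M - 1) := hv'lt _ (by omega)
            have hvp1 : v' (M - 1 + 1) = v (M + 2) := by
              rw [e1, hv'ge M le_rfl]
            rw [hvp, hvp1, hvq, hvq1]
            have := hmerge hM3 c (by omega) hc1 (by omega) (by omega) (by omega)
            exact ⟨this.1, this.2⟩
          · by_cases hqm : q = M - 1
            · have hM3 : M + 3 ≤ k := by omega
              subst hqm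
              obtain ⟨c, hc1, hck, hcpar, hcor, hvp, hvp1⟩ := chordmap p hp (by omega) hpm
              have hvq : v' (M - 1) = v (M - 1) := hv'lt _ (by omega)
              have hvq1 : v' (M - 1 + 1) = v (M + 2) := by
                rw [e1, hv'ge M le_rfl]
              rw [hvq, hvq1, hvp, hvp1]
              have := hmerge hM3 c (by omega) hc1 (by omega) (by omega) (by omega)
              exact ⟨this.2, this.1⟩
            · obtain ⟨cp, hcp1, hcpk, hcppar, hcpor, hvp, hvp1⟩ := chordmap p hp (by omega) hpm
              obtain ⟨cq, hcq1, hcqk, hcqpar, hcqor, hvq, hvq1⟩ := chordmap q (by omega)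
                (by omega) hqm
              rw [hvp, hvp1, hvq, hvq1]
              exact H.hf cp cq hcp1 (by omega) hcqk (by omega)
        · -- h1
          intro p hp1 hpk2
          by_cases hMtop : M + 1 = k
          · have hvk : v' k' = v (k - 2) := hv'lt _ (by omega)
            rw [hvk, hv'lt p (by omega), hv'lt (p+1) (by omega)]
            intro hcon
            have h3 : Btwn (v (k-1)) (v p) (v (p+1)) := by
              have h2 := H.hfw (p := p) (q := k - 2) (by omega) (by omega) (by omega)
                (by omega) (by omega) (by omega)
              rw [show k - 2 + 1 = k - 1 by omega] at h2
              exact h2.mp hcon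
            have h4 : ¬ Btwn (v k) (v p) (v (p+1)) := H.h1 p hp1 (by omega)
            have h5 := btwn_sep h3 h4
              (H.vne (by omega) le_rfl (by omega) (by omega) (by omega))
              (H.vne (by omega) le_rfl (by omega) (by omega) (by omega))
            have hM' : M = k - 1 := by omega
            rcases h5 with h6 | h6
            · exact hgap p (by omega) (by omega) (by omega) (by omega)
                (by rw [hM', show k - 1 + 1 = k by omega]; exact h6)
            · exact hgap (p+1) (by omega) (by omega) (by omega) (by omega)
                (by rw [hM', show k - 1 + 1 = k by omega]; exact h6)
          · have hM3 : M + 3 ≤ k := by omega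
            have hvk : v' k' = v k := by
              rw [hv'ge k' (by omega), show k' + 2 = k by omega]
            rw [hvk]
            by_cases hpm : p = M - 1
            · subst hpm
              rw [hv'lt (M-1) (by omega), e1, hv'ge M le_rfl]
              intro hcon
              have hchain := btwn_chain hcon
                (hgap k (by omega) le_rfl (by omega) (by omega))
                (H.vne (by omega) le_rfl (by omega) (by omega) (by omega))
                (H.vne (by omega) le_rfl (by omega) (by omega) (by omega))
              rcases hchain with h6 | h6
              · have := H.h1 (M-1) (by omega) (by omega)
                rw [e1] at this
                exact this h6
              · have := H.h1 (M+1) (by omega) (by omega)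
                rw [show M + 1 + 1 = M + 2 by omega] at this
                exact this h6
            · obtain ⟨c, hc1, hck, hcpar, hcor, hvp, hvp1⟩ := chordmap p (by omega) (by omega) hpm
              rw [hvp, hvp1]
              exact H.h1 c (by omega) (by omega)
        · -- h0
          intro q hq0 hq2 hqk
          have hqm : q ≠ M - 1 := by omega
          obtain ⟨c, hc1, hck, hcpar, hcor, hvq, hvq1⟩ := chordmap q (by omega) hqk hqm
          rw [hv'lt 1 (by omega), hvq, hvq1]
          exact H.h0 c (by omega) (by omega) hck
      have IH' := IH k' hk'lt hk' v' H'
      -- vertex mapping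
      have vertmap : ∀ i, 1 ≤ i → i ≤ k' → ∃ c, 1 ≤ c ∧ c ≤ k ∧ c ≠ M ∧ c ≠ M + 1 ∧
          v' i = v c := by
        intro i h1 h2
        by_cases h : i < M
        · exact ⟨i, h1, by omega, by omega, by omega, hv'lt i h⟩
        · exact ⟨i + 2, by omega, by omega, by omega, by omega, hv'ge i (by omega)⟩
      have hMne : v M ≠ v (M+1) := H.vne (by omega) (by omega) (by omega) hMk (by omega)
      -- zero-difference helper
      have hdd0 : ∀ x y : ℝ, x ≤ y → (∀ i, 1 ≤ i → i ≤ k' → ¬ (x ≤ v' i ∧ v' i < y)) →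
          Dd k' v' y = Dd k' v' x := by
        intro x y hxy hno
        have hd := dd_diff n' v' hxy
        rw [← hn'] at hd
        rw [if_neg (hno k' hk'1 le_rfl)] at hd
        rw [Finset.sum_eq_zero] at hd
        · omega
        · intro i hi
          rw [Finset.mem_range] at hi
          rw [if_neg (hno (2*i+1) (by omega) (by omega)),
            if_neg (hno (2*i+2) (by omega) (by omega))]
          ring
      -- the two gap values give equal Dd'
      have hEQ : Dd k' v' (v M) = Dd k' v' (v (M+1)) := by
        have hside : ∀ x y : ℝ, x ≤ y → (x = v M ∧ y = v (M+1)) ∨ (x = v (M+1) ∧ y = v M) →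
            ∀ i, 1 ≤ i → i ≤ k' → ¬ (x ≤ v' i ∧ v' i < y) := by
          intro x y hxy hor i h1 h2 hcon
          obtain ⟨c, hc1, hck, hcM, hcM1, hvc⟩ := vertmap i h1 h2
          rw [hvc] at hcon
          have hne1 : v c ≠ v M := H.vne hc1 hck (by omega) (by omega) hcM
          have hne2 : v c ≠ v (M+1) := H.vne hc1 hck (by omega) hMk hcM1
          have hbt : Btwn (v c) (v M) (v (M+1)) := by
            rw [btwn_iff]
            rcases hor with ⟨hx, hy⟩ | ⟨hx, hy⟩
            · subst hx; subst hy
              left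
              exact ⟨lt_of_le_of_ne hcon.1 (Ne.symm hne1), hcon.2⟩
            · subst hx; subst hy
              right
              exact ⟨lt_of_le_of_ne hcon.1 (Ne.symm hne2), hcon.2⟩
          exact hgap c hc1 hck hcM hcM1 hbt
        rcases le_total (v M) (v (M+1)) with h | h
        · exact (hdd0 (v M) (v (M+1)) h (hside _ _ h (Or.inl ⟨rfl, rfl⟩))).symm
        · exact hdd0 (v (M+1)) (v M) h (hside _ _ h (Or.inr ⟨rfl, rfl⟩))
      -- i₀ : position of the merged pair
      set i₀ : ℕ := (M - 2) / 2 with hi₀def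
      have hi₀ : 2 * i₀ + 1 = M - 1 ∧ 2 * i₀ + 2 = M := by omega
      -- common facts
      have ptyM : pty M = 1 := by unfold pty; rw [if_pos hM0]
      have ptyM1 : pty (M+1) = 0 := by unfold pty; rw [if_neg (by omega)]
      have IHm1 : Dd k' v' (v (M-1)) = 0 := by
        have h := IH' (M-1) (by omega) (by omega)
        rw [hv'lt (M-1) (by omega)] at h
        rw [h]; unfold pty; rw [if_neg (by omega)]
      -- pair mapping inside the reduced sums
      have pairmap : ∀ i, i < n' → i ≠ i₀ → ∃ c, c % 2 = 1 ∧ 1 ≤ c ∧ c + 2 ≤ k ∧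
          c ≠ M - 1 ∧ c ≠ M ∧ c ≠ M + 1 ∧ c + 1 ≠ M ∧ c + 1 ≠ M + 1 ∧
          v' (2*i+1) = v c ∧ v' (2*i+2) = v (c+1) := by
        intro i hi hine
        obtain ⟨c, hc1, hck, hcpar, hcor, hq, hq1⟩ := chordmap (2*i+1) (by omega) (by omega)
          (by omega)
        exact ⟨c, by omega, hc1, by omega, by omega, by omega, by omega, by omega, by omega,
          hq, hq1⟩
      -- main orientation computation
      have hDG : Dd k' v' (v M) = (if v M < v (M+1) then 1 else 0) := by
        rcases lt_or_gt_of_ne hMne with hlt | hgt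
        · rw [if_pos hlt]
          by_cases hMtop : M + 1 = k
          · -- top case: k = M+1
            have hidx : k' = M - 1 := by omega
            have hbk : v (M+1) = v k := by rw [hMtop]
            have hd := dd_lodd n' v' (v M)
            rw [← hn'] at hd
            have hvkk : v' k' = v (M-1) := by
              rw [hidx]
              exact hv'lt (M-1) (by omega)
            rw [hvkk] at hd
            have hlead : v (M-1) < v M := by
              by_contra hcon
              have hne : v (M-1) ≠ v M := H.vne (by omega) (by omega) (by omega) (by omega)
                (by omega)
              have h1 : v M < v (M-1) := lt_of_le_of_ne (not_lt.mp hcon) hne.symm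
              have h2 : v (M+1) < v (M-1) := by
                rcases lt_trichotomy (v (M-1)) (v (M+1)) with h | h | h
                · exact absurd (btwn_iff.mpr (Or.inl ⟨h1, h⟩))
                    (hgap (M-1) (by omega) (by omega) (by omega) (by omega))
                · exact absurd h (H.vne (by omega) (by omega) (by omega) (by omega) (by omega))
                · exact h
              have h3 : Btwn (v k) (v (M-1)) (v M) := by
                rw [btwn_iff]
                right
                rw [← hbk]
                exact ⟨hlt, h2⟩
              have h4 := H.h1 (M-1) (by omega) (by omega)
              rw [e1] at h4
              exact h4 h3
            rw [if_pos hlead] at hd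
            have hsum : (∑ i ∈ Finset.range n',
                ((if v' (2*i+1) < v M then (1:ℤ) else 0) -
                  (if v' (2*i+2) < v M then 1 else 0))) = 0 := by
              refine Finset.sum_eq_zero ?_
              intro i hi
              rw [Finset.mem_range] at hi
              rw [hv'lt (2*i+1) (by omega), hv'lt (2*i+2) (by omega)]
              have hnb : ¬ Btwn (v M) (v (2*i+1)) (v (2*i+2)) := by
                intro hcon
                have h4 : ¬ Btwn (v k) (v (2*i+1)) (v (2*i+2)) := by
                  have := H.h1 (2*i+1) (by omega) (by omega)
                  rwa [show 2*i+1+1 = 2*i+2 by omega] at this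
                have h5 := btwn_sep hcon h4
                  (H.vne (by omega) le_rfl (by omega) (by omega) (by omega))
                  (H.vne (by omega) le_rfl (by omega) (by omega) (by omega))
                rw [← hbk] at h5
                rcases h5 with h6 | h6
                · exact hgap (2*i+1) (by omega) (by omega) (by omega) (by omega) h6
                · exact hgap (2*i+2) (by omega) (by omega) (by omega) (by omega) h6
              have hiff := same_side hnb
                (H.vne (by omega) (by omega) (by omega) (by omega) (by omega))
                (H.vne (by omega) (by omega) (by omega) (by omega) (by omega))
              rw [if_congr hiff rfl rfl, sub_self]
            rw [hsum] at hd
            omega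
          · -- interior case: M + 3 ≤ k
            have hM3 : M + 3 ≤ k := by omega
            have hvk' : v' k' = v k := by
              rw [hv'ge k' (by omega), show k' + 2 = k by omega]
            have i₀mem : i₀ ∈ Finset.range n' := Finset.mem_range.mpr (by omega)
            have hvi₀1 : v' (2*i₀+1) = v (M-1) := by
              rw [show 2*i₀+1 = M-1 by omega]
              exact hv'lt _ (by omega)
            have hvi₀2 : v' (2*i₀+2) = v (M+2) := by
              rw [show 2*i₀+2 = M by omega]
              exact hv'ge M le_rfl
            have F3 : Btwn (v (M+1)) (v (M-1)) (v M) ↔ Btwn (v (M+2)) (v (M-1)) (v M) := by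
              have := H.hfw (p := M-1) (q := M+1) (by omega) (by omega) (by omega) (by omega)
                (by omega) (by omega)
              rwa [e1, show M+1+1 = M+2 by omega] at this
            have hwne : v (M-1) ≠ v M :=
              H.vne (by omega) (by omega) (by omega) (by omega) (by omega)
            rcases lt_or_gt_of_ne hwne with hwlt | hwgt
            · -- v (M-1) < v M
              have hd := dd_diff n' v' (le_of_lt hwlt)
              rw [← hn', hvk'] at hd
              have hleft : ¬ (v (M-1) ≤ v k ∧ v k < v M) := by
                rintro ⟨u1, u2⟩
                have hne : v k ≠ v (M-1) :=
                  H.vne (by omega) le_rfl (by omega) (by omega) (by omega)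
                have h4 := H.h1 (M-1) (by omega) (by omega)
                rw [e1] at h4
                exact h4 (btwn_iff.mpr (Or.inl ⟨lt_of_le_of_ne u1 hne.symm, u2⟩))
              rw [if_neg hleft] at hd
              have hsum : (∑ i ∈ Finset.range n',
                  ((if v (M-1) ≤ v' (2*i+1) ∧ v' (2*i+1) < v M then (1:ℤ) else 0) -
                    (if v (M-1) ≤ v' (2*i+2) ∧ v' (2*i+2) < v M then 1 else 0))) =
                  ((if v (M-1) ≤ v' (2*i₀+1) ∧ v' (2*i₀+1) < v M then (1:ℤ) else 0) -
                    (if v (M-1) ≤ v' (2*i₀+2) ∧ v' (2*i₀+2) < v M then 1 else 0)) := by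
                refine Finset.sum_eq_single_of_mem i₀ i₀mem ?_
                intro i hi hine
                rw [Finset.mem_range] at hi
                obtain ⟨c, hcp, hc1, hck2, hm1, hm2, hm3, hm4, hm5, hq, hq1⟩ :=
                  pairmap i hi hine
                rw [hq, hq1]
                have F : Btwn (v c) (v (M-1)) (v M) ↔ Btwn (v (c+1)) (v (M-1)) (v M) := by
                  have := H.hfw (p := M-1) (q := c) (by omega) hc1 (by omega) (by omega)
                    (by omega) (by omega)
                  rwa [e1] at this
                have hnc : v c ≠ v (M-1) :=
                  H.vne hc1 (by omega) (by omega) (by omega) hm1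
                have hnc1 : v (c+1) ≠ v (M-1) :=
                  H.vne (by omega) (by omega) (by omega) (by omega) (by omega)
                have hiff : (v (M-1) ≤ v c ∧ v c < v M) ↔
                    (v (M-1) ≤ v (c+1) ∧ v (c+1) < v M) := by
                  constructor
                  · rintro ⟨u1, u2⟩
                    have hb2 := F.mp (btwn_iff.mpr (Or.inl ⟨lt_of_le_of_ne u1 hnc.symm, u2⟩))
                    rw [btwn_iff] at hb2
                    rcases hb2 with ⟨u3, u4⟩ | ⟨u3, u4⟩
                    · exact ⟨le_of_lt u3, u4⟩
                    · exact absurd (u3.trans u4) (asymm hwlt)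
                  · rintro ⟨u1, u2⟩
                    have hb2 := F.mpr (btwn_iff.mpr (Or.inl ⟨lt_of_le_of_ne u1 hnc1.symm, u2⟩))
                    rw [btwn_iff] at hb2
                    rcases hb2 with ⟨u3, u4⟩ | ⟨u3, u4⟩
                    · exact ⟨le_of_lt u3, u4⟩
                    · exact absurd (u3.trans u4) (asymm hwlt)
                rw [if_congr hiff rfl rfl, sub_self]
              rw [hsum, hvi₀1, hvi₀2] at hd
              rw [if_pos ⟨le_refl (v (M-1)), hwlt⟩] at hd
              have hmid : ¬ (v (M-1) ≤ v (M+2) ∧ v (M+2) < v M) := by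
                rintro ⟨u1, u2⟩
                have hne : v (M+2) ≠ v (M-1) :=
                  H.vne (by omega) (by omega) (by omega) (by omega) (by omega)
                have hb2 := F3.mpr (btwn_iff.mpr (Or.inl ⟨lt_of_le_of_ne u1 hne.symm, u2⟩))
                rw [btwn_iff] at hb2
                rcases hb2 with ⟨u3, u4⟩ | ⟨u3, u4⟩ <;> linarith
              rw [if_neg hmid] at hd
              omega
            · -- v M < v (M-1); then v (M+1) < v (M-1)
              have hbw : v (M+1) < v (M-1) := by
                rcases lt_trichotomy (v (M-1)) (v (M+1)) with h | h | h
                · exact absurd (btwn_iff.mpr (Or.inl ⟨hwgt, h⟩))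
                    (hgap (M-1) (by omega) (by omega) (by omega) (by omega))
                · exact absurd h (H.vne (by omega) (by omega) (by omega) (by omega) (by omega))
                · exact h
              have hd := dd_diff n' v' (le_of_lt hbw)
              rw [← hn', hvk'] at hd
              have hleft : ¬ (v (M+1) ≤ v k ∧ v k < v (M-1)) := by
                rintro ⟨u1, u2⟩
                have hne : v k ≠ v (M+1) :=
                  H.vne (by omega) le_rfl (by omega) (by omega) (by omega)
                have h4 := H.h1 (M-1) (by omega) (by omega)
                rw [e1] at h4
                exact h4 (btwn_iff.mpr (Or.inr
                  ⟨hlt.trans (lt_of_le_of_ne u1 hne.symm), u2⟩))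
              rw [if_neg hleft] at hd
              have hsum : (∑ i ∈ Finset.range n',
                  ((if v (M+1) ≤ v' (2*i+1) ∧ v' (2*i+1) < v (M-1) then (1:ℤ) else 0) -
                    (if v (M+1) ≤ v' (2*i+2) ∧ v' (2*i+2) < v (M-1) then 1 else 0))) =
                  ((if v (M+1) ≤ v' (2*i₀+1) ∧ v' (2*i₀+1) < v (M-1) then (1:ℤ) else 0) -
                    (if v (M+1) ≤ v' (2*i₀+2) ∧ v' (2*i₀+2) < v (M-1) then 1 else 0)) := by
                refine Finset.sum_eq_single_of_mem i₀ i₀mem ?_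
                intro i hi hine
                rw [Finset.mem_range] at hi
                obtain ⟨c, hcp, hc1, hck2, hm1, hm2, hm3, hm4, hm5, hq, hq1⟩ :=
                  pairmap i hi hine
                rw [hq, hq1]
                have F : Btwn (v c) (v (M-1)) (v M) ↔ Btwn (v (c+1)) (v (M-1)) (v M) := by
                  have := H.hfw (p := M-1) (q := c) (by omega) hc1 (by omega) (by omega)
                    (by omega) (by omega)
                  rwa [e1] at this
                have tr : ∀ z, 1 ≤ z → z ≤ k → z ≠ M → z ≠ M + 1 → z ≠ M + 1 →
                    ((v (M+1) ≤ v z ∧ v z < v (M-1)) ↔ Btwn (v z) (v (M-1)) (v M)) := by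
                  intro z hz1 hzk hzM hzM1 _
                  have hzb : v z ≠ v (M+1) := H.vne hz1 hzk (by omega) (by omega) hzM1
                  constructor
                  · rintro ⟨u1, u2⟩
                    exact btwn_iff.mpr (Or.inr
                      ⟨hlt.trans (lt_of_le_of_ne u1 hzb.symm), u2⟩)
                  · intro hb
                    rw [btwn_iff] at hb
                    rcases hb with ⟨u3, u4⟩ | ⟨u3, u4⟩
                    · exact absurd (u3.trans u4) (by linarith)
                    · have : ¬ (v M < v z ∧ v z < v (M+1)) := by
                        intro hcon
                        exact hgap z hz1 hzk hzM hzM1 (btwn_iff.mpr (Or.inl hcon))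
                      push_neg at this
                      exact ⟨lt_of_le_of_ne (this u3) hzb.symm |> le_of_lt, u4⟩
                rw [if_congr (((tr c hc1 (by omega) hm2 hm3 hm3).trans F).trans
                  (tr (c+1) (by omega) (by omega) hm4 hm5 hm5).symm) rfl rfl, sub_self]
              rw [hsum, hvi₀1, hvi₀2] at hd
              rw [if_neg (by rintro ⟨-, h⟩; exact lt_irrefl _ h :
                ¬ (v (M+1) ≤ v (M-1) ∧ v (M-1) < v (M-1)))] at hd
              have hmid : v (M+1) ≤ v (M+2) ∧ v (M+2) < v (M-1) := by
                have hb2 := F3.mp (btwn_iff.mpr (Or.inr ⟨hlt, hbw⟩))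
                rw [btwn_iff] at hb2
                rcases hb2 with ⟨u3, u4⟩ | ⟨u3, u4⟩
                · exact absurd (u3.trans u4) (by linarith)
                · have hne : v (M+2) ≠ v (M+1) :=
                    H.vne (by omega) (by omega) (by omega) (by omega) (by omega)
                  have : ¬ (v M < v (M+2) ∧ v (M+2) < v (M+1)) := by
                    intro hcon
                    exact hgap (M+2) (by omega) (by omega) (by omega) (by omega)
                      (btwn_iff.mpr (Or.inl hcon))
                  push_neg at this
                  exact ⟨lt_of_le_of_ne (this u3) hne.symm |> le_of_lt, u4⟩
              rw [if_pos hmid] at hd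
              omega
        · -- v (M+1) < v M : target value 0
          rw [if_neg (by linarith : ¬ v M < v (M+1))]
          by_cases hMtop : M + 1 = k
          · have hidx : k' = M - 1 := by omega
            have hbk : v (M+1) = v k := by rw [hMtop]
            have hd := dd_lodd n' v' (v (M+1))
            rw [← hn'] at hd
            have hvkk : v' k' = v (M-1) := by
              rw [hidx]
              exact hv'lt (M-1) (by omega)
            rw [hvkk] at hd
            have hlead : ¬ (v (M-1) < v (M+1)) := by
              intro hcon
              have h3 : Btwn (v k) (v (M-1)) (v M) := by
                rw [btwn_iff]
                left
                rw [← hbk]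
                exact ⟨hcon, hgt⟩
              have h4 := H.h1 (M-1) (by omega) (by omega)
              rw [e1] at h4
              exact h4 h3
            rw [if_neg hlead] at hd
            have hsum : (∑ i ∈ Finset.range n',
                ((if v' (2*i+1) < v (M+1) then (1:ℤ) else 0) -
                  (if v' (2*i+2) < v (M+1) then 1 else 0))) = 0 := by
              refine Finset.sum_eq_zero ?_
              intro i hi
              rw [Finset.mem_range] at hi
              rw [hv'lt (2*i+1) (by omega), hv'lt (2*i+2) (by omega)]
              have hnb : ¬ Btwn (v (M+1)) (v (2*i+1)) (v (2*i+2)) := by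
                have := H.h1 (2*i+1) (by omega) (by omega)
                rw [show 2*i+1+1 = 2*i+2 by omega] at this
                rwa [hbk]
              have hiff := same_side hnb
                (H.vne (by omega) (by omega) (by omega) (by omega) (by omega))
                (H.vne (by omega) (by omega) (by omega) (by omega) (by omega))
              rw [if_congr hiff rfl rfl, sub_self]
            rw [hsum] at hd
            omega
          · have hM3 : M + 3 ≤ k := by omega
            have hvk' : v' k' = v k := by
              rw [hv'ge k' (by omega), show k' + 2 = k by omega]
            have i₀mem : i₀ ∈ Finset.range n' := Finset.mem_range.mpr (by omega)
            have hvi₀1 : v' (2*i₀+1) = v (M-1) := by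
              rw [show 2*i₀+1 = M-1 by omega]
              exact hv'lt _ (by omega)
            have hvi₀2 : v' (2*i₀+2) = v (M+2) := by
              rw [show 2*i₀+2 = M by omega]
              exact hv'ge M le_rfl
            have F3' : Btwn (v (M-1)) (v (M+1)) (v (M+2)) ↔
                Btwn (v M) (v (M+1)) (v (M+2)) := by
              have := H.hfw (p := M+1) (q := M-1) (by omega) (by omega) (by omega) (by omega)
                (by omega) (by omega)
              rwa [e1, show M+1+1 = M+2 by omega] at this
            have IHM2 : Dd k' v' (v (M+2)) = 1 := by
              have h := IH' M (by omega) (by omega)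
              rw [hv'ge M le_rfl] at h
              rw [h, ptyM]
            have hw2ne : v (M+2) ≠ v (M+1) :=
              H.vne (by omega) (by omega) (by omega) (by omega) (by omega)
            rcases lt_or_gt_of_ne hw2ne with hw2b | hw2gt
            · -- v (M+2) < v (M+1)
              have hd := dd_diff n' v' (le_of_lt hw2b)
              rw [← hn', hvk'] at hd
              have hleft : ¬ (v (M+2) ≤ v k ∧ v k < v (M+1)) := by
                rintro ⟨u1, u2⟩
                have hne : v k ≠ v (M+2) :=
                  H.vne (by omega) le_rfl (by omega) (by omega) (by omega)
                have h4 := H.h1 (M+1) (by omega) (by omega)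
                rw [show M+1+1 = M+2 by omega] at h4
                exact h4 (btwn_iff.mpr (Or.inr ⟨lt_of_le_of_ne u1 hne.symm, u2⟩))
              rw [if_neg hleft] at hd
              have hsum : (∑ i ∈ Finset.range n',
                  ((if v (M+2) ≤ v' (2*i+1) ∧ v' (2*i+1) < v (M+1) then (1:ℤ) else 0) -
                    (if v (M+2) ≤ v' (2*i+2) ∧ v' (2*i+2) < v (M+1) then 1 else 0))) =
                  ((if v (M+2) ≤ v' (2*i₀+1) ∧ v' (2*i₀+1) < v (M+1) then (1:ℤ) else 0) -
                    (if v (M+2) ≤ v' (2*i₀+2) ∧ v' (2*i₀+2) < v (M+1) then 1 else 0)) := by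
                refine Finset.sum_eq_single_of_mem i₀ i₀mem ?_
                intro i hi hine
                rw [Finset.mem_range] at hi
                obtain ⟨c, hcp, hc1, hck2, hm1, hm2, hm3, hm4, hm5, hq, hq1⟩ :=
                  pairmap i hi hine
                rw [hq, hq1]
                have F : Btwn (v c) (v (M+1)) (v (M+2)) ↔
                    Btwn (v (c+1)) (v (M+1)) (v (M+2)) := by
                  have := H.hfw (p := M+1) (q := c) (by omega) hc1 (by omega) (by omega)
                    (by omega) (by omega)
                  rwa [show M+1+1 = M+2 by omega] at this
                have tr : ∀ z, 1 ≤ z → z ≤ k → z ≠ M + 2 →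
                    ((v (M+2) ≤ v z ∧ v z < v (M+1)) ↔
                      Btwn (v z) (v (M+1)) (v (M+2))) := by
                  intro z hz1 hzk hzM2
                  have hzb : v z ≠ v (M+2) := H.vne hz1 hzk (by omega) (by omega) hzM2
                  constructor
                  · rintro ⟨u1, u2⟩
                    exact btwn_iff.mpr (Or.inr ⟨lt_of_le_of_ne u1 hzb.symm, u2⟩)
                  · intro hb
                    rw [btwn_iff] at hb
                    rcases hb with ⟨u3, u4⟩ | ⟨u3, u4⟩
                    · exact absurd (u3.trans u4) (by linarith)
                    · exact ⟨le_of_lt u3, u4⟩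
                rw [if_congr (((tr c hc1 (by omega) (by omega)).trans F).trans
                  (tr (c+1) (by omega) (by omega) (by omega)).symm) rfl rfl, sub_self]
              rw [hsum, hvi₀1, hvi₀2] at hd
              have hmid1 : ¬ (v (M+2) ≤ v (M-1) ∧ v (M-1) < v (M+1)) := by
                rintro ⟨u1, u2⟩
                have hne : v (M-1) ≠ v (M+2) :=
                  H.vne (by omega) (by omega) (by omega) (by omega) (by omega)
                have hb2 := F3'.mp (btwn_iff.mpr (Or.inr ⟨lt_of_le_of_ne u1 hne.symm, u2⟩))
                rw [btwn_iff] at hb2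
                rcases hb2 with ⟨u3, u4⟩ | ⟨u3, u4⟩ <;> linarith
              rw [if_neg hmid1, if_pos ⟨le_refl (v (M+2)), hw2b⟩] at hd
              omega
            · -- v (M+1) < v (M+2); then also v M < v (M+2)
              have haw2 : v M < v (M+2) := by
                rcases lt_trichotomy (v (M+2)) (v M) with h | h | h
                · exact absurd (btwn_iff.mpr (Or.inr ⟨hw2gt, h⟩))
                    (hgap (M+2) (by omega) (by omega) (by omega) (by omega))
                · exact absurd h (H.vne (by omega) (by omega) (by omega) (by omega) (by omega))
                · exact h
              have hd := dd_diff n' v' (le_of_lt hw2gt)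
              rw [← hn', hvk'] at hd
              have hleft : ¬ (v (M+1) ≤ v k ∧ v k < v (M+2)) := by
                rintro ⟨u1, u2⟩
                have hne : v k ≠ v (M+1) :=
                  H.vne (by omega) le_rfl (by omega) (by omega) (by omega)
                have h4 := H.h1 (M+1) (by omega) (by omega)
                rw [show M+1+1 = M+2 by omega] at h4
                exact h4 (btwn_iff.mpr (Or.inl ⟨lt_of_le_of_ne u1 hne.symm, u2⟩))
              rw [if_neg hleft] at hd
              have hsum : (∑ i ∈ Finset.range n',
                  ((if v (M+1) ≤ v' (2*i+1) ∧ v' (2*i+1) < v (M+2) then (1:ℤ) else 0) -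
                    (if v (M+1) ≤ v' (2*i+2) ∧ v' (2*i+2) < v (M+2) then 1 else 0))) =
                  ((if v (M+1) ≤ v' (2*i₀+1) ∧ v' (2*i₀+1) < v (M+2) then (1:ℤ) else 0) -
                    (if v (M+1) ≤ v' (2*i₀+2) ∧ v' (2*i₀+2) < v (M+2) then 1 else 0)) := by
                refine Finset.sum_eq_single_of_mem i₀ i₀mem ?_
                intro i hi hine
                rw [Finset.mem_range] at hi
                obtain ⟨c, hcp, hc1, hck2, hm1, hm2, hm3, hm4, hm5, hq, hq1⟩ :=
                  pairmap i hi hine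
                rw [hq, hq1]
                have F : Btwn (v c) (v (M+1)) (v (M+2)) ↔
                    Btwn (v (c+1)) (v (M+1)) (v (M+2)) := by
                  have := H.hfw (p := M+1) (q := c) (by omega) hc1 (by omega) (by omega)
                    (by omega) (by omega)
                  rwa [show M+1+1 = M+2 by omega] at this
                have tr : ∀ z, 1 ≤ z → z ≤ k → z ≠ M + 1 →
                    ((v (M+1) ≤ v z ∧ v z < v (M+2)) ↔
                      Btwn (v z) (v (M+1)) (v (M+2))) := by
                  intro z hz1 hzk hzM1
                  have hzb : v z ≠ v (M+1) := H.vne hz1 hzk (by omega) (by omega) hzM1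
                  constructor
                  · rintro ⟨u1, u2⟩
                    exact btwn_iff.mpr (Or.inl ⟨lt_of_le_of_ne u1 hzb.symm, u2⟩)
                  · intro hb
                    rw [btwn_iff] at hb
                    rcases hb with ⟨u3, u4⟩ | ⟨u3, u4⟩
                    · exact ⟨le_of_lt u3, u4⟩
                    · exact absurd (u3.trans u4) (by linarith)
                rw [if_congr (((tr c hc1 (by omega) hm3).trans F).trans
                  (tr (c+1) (by omega) (by omega) hm5).symm) rfl rfl, sub_self]
              rw [hsum, hvi₀1, hvi₀2] at hd
              have hmid1 : v (M+1) ≤ v (M-1) ∧ v (M-1) < v (M+2) := by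
                have hb2 := F3'.mpr (btwn_iff.mpr (Or.inl ⟨hgt, haw2⟩))
                rw [btwn_iff] at hb2
                rcases hb2 with ⟨u3, u4⟩ | ⟨u3, u4⟩
                · exact ⟨le_of_lt u3, u4⟩
                · exact absurd (u3.trans u4) (by linarith)
              rw [if_pos hmid1, if_neg (by rintro ⟨-, h⟩; exact lt_irrefl _ h :
                ¬ (v (M+1) ≤ v (M+2) ∧ v (M+2) < v (M+2)))] at hd
              omega
      -- conclusion
      have hrel := dd_rel v (v m) hM2 hM0 hMk
      rw [← hv'def, ← hk'def] at hrel
      by_cases hmM : m = M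
      · rw [hmM] at hrel
        rw [hmM, hrel, hDG, ptyM]
        rcases lt_or_gt_of_ne hMne with hlt | hgt
        · rw [if_pos hlt, if_neg (lt_irrefl (v M)), if_neg (by linarith : ¬ v (M+1) < v M)]
          norm_num
        · rw [if_neg (by linarith : ¬ v M < v (M+1)), if_neg (lt_irrefl (v M)), if_pos hgt]
          norm_num
      · by_cases hmM1 : m = M + 1
        · subst hmM1
          have hDG1 : Dd k' v' (v (M+1)) = (if v M < v (M+1) then 1 else 0) :=
            hEQ.symm.trans hDG
          rw [hrel, hDG1, ptyM1, if_neg (lt_irrefl (v (M+1)))]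
          ring
        · have hmne1 : v M ≠ v m := H.vne (by omega) (by omega) hm1 hmk (by omega)
          have hmne2 : v (M+1) ≠ v m := H.vne (by omega) hMk hm1 hmk (by omega)
          have hiff : (v M < v m ↔ v (M+1) < v m) :=
            same_side (hgap m hm1 hmk hmM hmM1) hmne1 hmne2
          have hIHm : Dd k' v' (v m) = pty m := by
            by_cases hmlt : m < M
            · have h := IH' m hm1 (by omega)
              rwa [hv'lt m hmlt] at h
            · have h := IH' (m - 2) (by omega) (by omega)
              rw [hv'ge (m-2) (by omega), show m - 2 + 2 = m by omega] at h
              rw [h]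
              unfold pty
              rw [show (m-2) % 2 = m % 2 from by omega]
          rw [hrel, if_congr hiff rfl rfl, hIHm]
          ring

/-! ### Values away from the vertices -/

lemma coreA {k : ℕ} {v : ℕ → ℝ} (hk : k % 2 = 1) (H : Hyp k v) (t : ℝ) :
    Dd k v t = 0 ∨ Dd k v t = 1 := by
  classical
  set s : Finset ℕ := (Finset.range k).filter (fun j => v (j+1) < t) with hs
  by_cases hsne : s.Nonempty
  · obtain ⟨jm, hjm, hmax⟩ := Finset.exists_max_image s (fun j => v (j+1)) hsne
    simp only [hs, Finset.mem_filter, Finset.mem_range] at hjm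
    have key : ∀ j ∈ Finset.range k,
        (-1:ℤ)^j * (if v (j+1) < t then 1 else 0) =
        (-1:ℤ)^j * (if v (j+1) < v (jm+1) then 1 else 0) +
          (if j = jm then (-1:ℤ)^j else 0) := by
      intro j hj
      rw [Finset.mem_range] at hj
      by_cases hjj : j = jm
      · subst hjj
        rw [if_pos hjm.2, if_neg (lt_irrefl _), if_pos rfl]
        ring
      · rw [if_neg hjj]
        have hne : v (j+1) ≠ v (jm+1) :=
          H.vne (by omega) (by omega) (by omega) (by omega) (by omega)
        have hiff : (v (j+1) < t) ↔ (v (j+1) < v (jm+1)) := by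
          constructor
          · intro h
            refine lt_of_le_of_ne ?_ hne
            have hmem : j ∈ s := by
              simp only [hs, Finset.mem_filter, Finset.mem_range]
              exact ⟨hj, h⟩
            exact hmax j hmem
          · intro h
            exact h.trans hjm.2
        rw [if_congr hiff rfl rfl]
        ring
    have hsplit : Dd k v t = Dd k v (v (jm+1)) + (-1:ℤ)^jm := by
      unfold Dd
      rw [Finset.sum_congr rfl key, Finset.sum_add_distrib, Finset.sum_ite_eq',
        if_pos (Finset.mem_range.mpr hjm.1)]
    have hcore := core k hk v H (jm+1) (by omega) (by omega)
    rw [hsplit, hcore]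
    unfold pty
    by_cases hpar : (jm+1) % 2 = 0
    · rw [if_pos hpar, Odd.neg_one_pow (Nat.odd_iff.mpr (by omega))]
      left; ring
    · rw [if_neg hpar, Even.neg_one_pow (Nat.even_iff.mpr (by omega))]
      right; ring
  · left
    unfold Dd
    refine Finset.sum_eq_zero ?_
    intro j hj
    rw [if_neg, mul_zero]
    intro hcon
    exact hsne ⟨j, by simp only [hs, Finset.mem_filter]; exact ⟨hj, hcon⟩⟩

/-! ### Decoding the EReal hypotheses -/

lemma esgn_coe (x : ℝ) : esgn (x : EReal) = Real.sign x := by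
  rcases lt_trichotomy x 0 with h | h | h
  · have h1 : (x : EReal) < 0 := by
      rw [← EReal.coe_zero]; exact_mod_cast h
    simp only [esgn, if_pos h1]
    rw [Real.sign_of_neg h]
  · rw [h]
    simp [esgn, Real.sign_zero]
  · have h1 : (0 : EReal) < x := by
      rw [← EReal.coe_zero]; exact_mod_cast h
    simp only [esgn, if_neg (not_lt.mpr (le_of_lt h1)), if_pos h1]
    rw [Real.sign_of_pos h]

lemma esgn_bot : esgn (⊥ : EReal) = -1 := by simp [esgn]

lemma esgn_top : esgn (⊤ : EReal) = 1 := by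
  simp only [esgn, if_neg (not_lt.mpr (le_of_lt EReal.zero_lt_top)),
    if_pos EReal.zero_lt_top]

lemma ereal_sub (a b : ℝ) : (a : EReal) + (-(b : EReal)) = ((a - b : ℝ) : EReal) := by
  rw [← EReal.coe_neg, ← EReal.coe_add, sub_eq_add_neg]

lemma extY_in {k j : ℕ} (Y : ℕ → ℝ) (h1 : 1 ≤ j) (h2 : j ≤ k) :
    extY k Y j = ((Y j : ℝ) : EReal) := if_pos ⟨h1, h2⟩

lemma extY_out {k j : ℕ} (Y : ℕ → ℝ) (h : ¬ (1 ≤ j ∧ j ≤ k)) : extY k Y j = ⊥ := if_neg h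

lemma buildHyp (k : ℕ) (Y : ℕ → ℝ) (hk : k % 2 = 1)
    (hdist : ∀ j j' : ℕ, 1 ≤ j → j < j' → j' ≤ k → Y j ≠ Y j')
    (hnc : ∀ p q : ℕ, p < q → q ≤ k → p % 2 = q % 2 →
      NCS2E (extY k Y p) (extY k Y (p + 1)) (-(extY k Y q)) (-(extY k Y (q + 1)))) :
    Hyp k Y := by
  have vne : ∀ a b : ℕ, 1 ≤ a → a ≤ k → 1 ≤ b → b ≤ k → a ≠ b → Y a ≠ Y b := by
    intro a b h1 h2 h3 h4 h5
    rcases lt_or_gt_of_ne h5 with h | h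
    · exact hdist a b h1 h h4
    · exact (hdist b a h3 h h2).symm
  refine ⟨hdist, ?_, ?_, ?_⟩
  · -- hf
    intro p q hp hpq hqk hpar
    obtain ⟨-, hsum⟩ := hnc p q (by omega) (by omega) hpar
    rw [extY_in (j := p) Y hp (by omega), extY_in (j := p+1) Y (by omega) (by omega),
      extY_in (j := q) Y (by omega) (by omega), extY_in (j := q+1) Y (by omega) hqk,
      ereal_sub, ereal_sub, ereal_sub, ereal_sub,
      esgn_coe, esgn_coe, esgn_coe, esgn_coe] at hsum
    have h4 := sgn4 (a1 := Y p) (a2 := Y (p+1)) (b1 := Y q) (b2 := Y (q+1))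
      (vne _ _ hp (by omega) (by omega) (by omega) (by omega))
      (vne _ _ hp (by omega) (by omega) hqk (by omega))
      (vne _ _ (by omega) (by omega) (by omega) (by omega) (by omega))
      (vne _ _ (by omega) (by omega) (by omega) hqk (by omega)) hsum
    exact ⟨h4.1, h4.2⟩
  · -- h1
    intro p hp1 hpk
    obtain ⟨-, hsum⟩ := hnc p k (by omega) le_rfl (by omega)
    rw [extY_in (j := p) Y (by omega) (by omega), extY_in (j := p+1) Y (by omega) (by omega),
      extY_in (j := k) Y (by omega) le_rfl,
      extY_out (j := k+1) Y (by omega : ¬ (1 ≤ k + 1 ∧ k + 1 ≤ k)),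
      EReal.neg_bot, EReal.coe_add_top, EReal.coe_add_top,
      ereal_sub, ereal_sub, esgn_coe, esgn_coe, esgn_top] at hsum
    rw [btwn_iff_sign
      (vne _ _ (by omega) (by omega) (by omega) le_rfl (by omega))
      (vne _ _ (by omega) (by omega) (by omega) le_rfl (by omega))]
    intro hcon
    apply hcon
    linarith
  · -- h0
    intro q hq0 hq2 hqk
    obtain ⟨-, hsum⟩ := hnc 0 q (by omega) (by omega) (by omega)
    rw [extY_out (j := 0) Y (by omega : ¬ (1 ≤ 0 ∧ 0 ≤ k)), EReal.bot_add, EReal.bot_add,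
      extY_in (j := 1) Y le_rfl (by omega), extY_in (j := q) Y (by omega) (by omega),
      extY_in (j := q+1) Y (by omega) hqk, ereal_sub, ereal_sub, esgn_coe, esgn_coe,
      esgn_bot] at hsum
    rw [btwn_iff_sign
      (vne _ _ (by omega) (by omega) (by omega) (by omega) (by omega))
      (vne _ _ (by omega) (by omega) (by omega) (by omega) (by omega))]
    intro hcon
    have c1 : (Y q - Y 1).sign = -((Y 1 - Y q).sign) := by
      rw [← Real.sign_neg]; ring_nf
    have c2 : (Y (q+1) - Y 1).sign = -((Y 1 - Y (q+1)).sign) := by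
      rw [← Real.sign_neg]; ring_nf
    rw [c1, c2] at hcon
    apply hcon
    have h12 : (Y 1 - Y q).sign = (Y 1 - Y (q+1)).sign := by linarith
    rw [h12]

/-- Combinatorial Jordan curve theorem: under the non-crossing hypothesis (i) of the
combinatorial conjecture, each winding number `Wᵢ` equals `½` at each `y_{i,j}` and takes
only the values `0` and `1` away from the `y_{i,j}`. -/
theorem stmt12 (k : Fin 3 → ℕ) (hk : ∀ i, Odd (k i)) (Y : Fin 3 → ℕ → ℝ)
    (hdist : ∀ i, ∀ j j' : ℕ, 1 ≤ j → j < j' → j' ≤ k i → Y i j ≠ Y i j')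
    (hnc : ∀ i, ∀ p q : ℕ, p < q → q ≤ k i → p % 2 = q % 2 →
      NCS2E (extY (k i) (Y i) p) (extY (k i) (Y i) (p + 1))
        (-(extY (k i) (Y i) q)) (-(extY (k i) (Y i) (q + 1)))) :
    ∀ i, (∀ j : ℕ, 1 ≤ j → j ≤ k i → wind (k i) (Y i) (Y i j) = 1 / 2) ∧
      (∀ t : ℝ, (∀ j : ℕ, 1 ≤ j → j ≤ k i → t ≠ Y i j) →
        wind (k i) (Y i) t = 0 ∨ wind (k i) (Y i) t = 1) := by
  intro i
  have hk1 : k i % 2 = 1 := Nat.odd_iff.mp (hk i)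
  have H : Hyp (k i) (Y i) := buildHyp (k i) (Y i) hk1 (hdist i) (hnc i)
  have hcast : ∀ t : ℝ, ((Dd (k i) (Y i) t : ℤ) : ℝ) =
      ∑ j ∈ Finset.range (k i), (-1:ℝ)^j * (if Y i (j+1) < t then 1 else 0) := by
    intro t
    unfold Dd
    push_cast [apply_ite (fun z : ℤ => (z : ℝ))]
    rfl
  have hgeom : ∑ j ∈ Finset.range (k i), (-1:ℝ)^j = 1 := by
    rw [neg_one_geom_sum, if_neg (by simp [Nat.even_iff]; omega)]
  have hsign : ∀ x t : ℝ, x ≠ t →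
      Real.sign (x - t) = 1 - 2 * (if x < t then (1:ℝ) else 0) := by
    intro x t hx
    rcases lt_or_gt_of_ne hx with h | h
    · rw [Real.sign_of_neg (by linarith : x - t < 0), if_pos h]; ring
    · rw [Real.sign_of_pos (by linarith : 0 < x - t), if_neg (by linarith)]; ring
  constructor
  · intro m hm1 hmk
    unfold wind
    have hterm : ∀ j ∈ Finset.range (k i),
        (-1:ℝ)^j * Real.sign (Y i (j+1) - Y i m) =
        ((-1:ℝ)^j - 2 * ((-1:ℝ)^j * (if Y i (j+1) < Y i m then (1:ℝ) else 0))) -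
          (if j = m - 1 then (-1:ℝ)^j else 0) := by
      intro j hj
      rw [Finset.mem_range] at hj
      by_cases hjm : j = m - 1
      · subst hjm
        rw [if_pos rfl, show m - 1 + 1 = m by omega, sub_self, Real.sign_zero,
          if_neg (lt_irrefl _)]
        ring
      · rw [if_neg hjm, hsign _ _ (H.vne (by omega) (by omega) hm1 hmk (by omega))]
        ring
    rw [Finset.sum_congr rfl hterm, Finset.sum_sub_distrib, Finset.sum_sub_distrib,
      Finset.sum_ite_eq', if_pos (Finset.mem_range.mpr (by omega : m - 1 < k i)),
      ← Finset.mul_sum, hgeom, ← hcast (Y i m), core (k i) hk1 (Y i) H m hm1 hmk]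
    unfold pty
    by_cases hpar : m % 2 = 0
    · rw [if_pos hpar, Odd.neg_one_pow (n := m - 1) (Nat.odd_iff.mpr (by omega))]
      norm_num
    · rw [if_neg hpar, Even.neg_one_pow (n := m - 1) (Nat.even_iff.mpr (by omega))]
      norm_num
  · intro t ht
    unfold wind
    have hterm : ∀ j ∈ Finset.range (k i),
        (-1:ℝ)^j * Real.sign (Y i (j+1) - t) =
        (-1:ℝ)^j - 2 * ((-1:ℝ)^j * (if Y i (j+1) < t then (1:ℝ) else 0)) := by
      intro j hj
      rw [Finset.mem_range] at hj
      rw [hsign _ _ (Ne.symm (ht (j+1) (by omega) (by omega)))]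
      ring
    rw [Finset.sum_congr rfl hterm, Finset.sum_sub_distrib, ← Finset.mul_sum, hgeom,
      ← hcast t]
    rcases coreA hk1 H t with h | h
    · right; rw [h]; norm_num
    · left; rw [h]; norm_num
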